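/- Let G be a finite, connected, simple graph with diameter D and maximum degree d, let n ∈ (1,∞), κ ∈ ℝ, and suppose f : V → ℂ is a nonzero eigenfunction of −Δ with eigenvalue λ > 0 which satisfies CD(n,κ). Then λ ≥ (1 + 4κ·d·D²)/(d·(8 − 2/n)·D²). -/

import Mathlib

open Finset ComplexConjugate
open scoped Classical

namespace Mag

variable {V : Type*}

/-- The degree of a vertex: total weight of incident edges. -/
noncomputable def deg [Fintype V] (p : V → V → ℝ) (x : V) : ℝ := ∑ y, p x y

/-- Adjacency: positive edge weight. -/
def Adj (p : V → V → ℝ) (x y : V) : Prop := 0 < p x y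

/-- Axioms of a weighted graph: symmetric nonnegative weights, no loops,
positive degrees. -/
structure IsWeightedGraph [Fintype V] (p : V → V → ℝ) : Prop where
  symm : ∀ x y, p x y = p y x
  nonneg : ∀ x y, 0 ≤ p x y
  loopless : ∀ x, p x x = 0
  deg_pos : ∀ x, 0 < deg p x

/-- Connectivity: any two vertices are joined by a path of successively
adjacent vertices. -/
def Connected (p : V → V → ℝ) : Prop :=
  ∀ x y : V, ∃ L : List V,
    List.Chain (Adj p) x L ∧ (x :: L).getLast (List.cons_ne_nil x L) = y

/-- The graph distance from `x` to `y` is at most `n`. -/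
def distLE (p : V → V → ℝ) (x y : V) (n : ℕ) : Prop :=
  ∃ L : List V, L.length ≤ n ∧ List.Chain (Adj p) x L ∧
    (x :: L).getLast (List.cons_ne_nil x L) = y

/-- `D` is the diameter: every pair of vertices is at distance at most `D`,
and some pair is at distance at least `D`. -/
def IsDiameter (p : V → V → ℝ) (D : ℕ) : Prop :=
  (∀ x y, distLE p x y D) ∧ ∃ x y, ∀ n, distLE p x y n → D ≤ n

/-- The (normalized) graph Laplace operator on complex-valued functions. -/
noncomputable def lap [Fintype V] (p : V → V → ℝ) (f : V → ℂ) (x : V) : ℂ :=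
  (deg p x : ℂ)⁻¹ * ∑ y, (p x y : ℂ) * (f y - f x)

/-- The graph Laplace operator acting on real-valued functions. -/
noncomputable def lapR [Fintype V] (p : V → V → ℝ) (u : V → ℝ) (x : V) : ℝ :=
  (deg p x)⁻¹ * ∑ y, p x y * (u y - u x)

/-- The energy `|∇f|²(x)` of a function at a vertex. -/
noncomputable def energy [Fintype V] (p : V → V → ℝ) (f : V → ℂ) (x : V) : ℝ :=
  (deg p x)⁻¹ * ∑ y, p x y * ‖f y - f x‖ ^ 2

/-- The first curvature operator `Γ`. -/
noncomputable def gamma [Fintype V] (p : V → V → ℝ) (f g : V → ℂ) (x : V) : ℂ :=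
  (1 / 2) * (lap p (fun v => f v * conj (g v)) x - f x * conj (lap p g x)
    - lap p f x * conj (g x))

/-- The iterated (Ricci) curvature operator `Γ₂`. -/
noncomputable def gamma2 [Fintype V] (p : V → V → ℝ) (f g : V → ℂ) (x : V) : ℂ :=
  (1 / 2) * (lap p (gamma p f g) x - gamma p f (lap p g) x - gamma p (lap p f) g x)

/-- `f` satisfies the curvature-dimension inequality `CD(n,κ)`:
`Γ₂(f,f)(x) ≥ (1/n)|Δf(x)|² + κ·Γ(f,f)(x)` at every vertex. -/
def SatCD [Fintype V] (p : V → V → ℝ) (n κ : ℝ) (f : V → ℂ) : Prop :=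
  ∀ x : V, (1 / n) * ‖lap p f x‖ ^ 2 + κ * (gamma p f f x).re ≤ (gamma2 p f f x).re

/-- The magnetic Laplace operator. -/
noncomputable def magLap [Fintype V] (p : V → V → ℝ) (σ : V → V → ℂ)
    (f : V → ℂ) (x : V) : ℂ :=
  (deg p x : ℂ)⁻¹ * ∑ y, (p x y : ℂ) * (σ x y * f y - f x)

/-- The magnetic energy `|∇^σ f|²(x)`. -/
noncomputable def magEnergy [Fintype V] (p : V → V → ℝ) (σ : V → V → ℂ)
    (f : V → ℂ) (x : V) : ℝ :=
  (deg p x)⁻¹ * ∑ y, p x y * ‖σ x y * f y - f x‖ ^ 2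

/-- The first magnetic curvature operator `Γ^σ`. -/
noncomputable def magGamma [Fintype V] (p : V → V → ℝ) (σ : V → V → ℂ)
    (f g : V → ℂ) (x : V) : ℂ :=
  (1 / 2) * (magLap p σ (fun v => f v * conj (g v)) x - f x * conj (magLap p σ g x)
    - magLap p σ f x * conj (g x))

/-- The magnetic Ricci curvature operator `Γ₂^σ`. -/
noncomputable def magGamma2 [Fintype V] (p : V → V → ℝ) (σ : V → V → ℂ)
    (f g : V → ℂ) (x : V) : ℂ :=
  (1 / 2) * (lap p (magGamma p σ f g) x - magGamma p σ f (magLap p σ g) x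
    - magGamma p σ (magLap p σ f) g x)

/-- `f` satisfies the magnetic curvature-dimension inequality `CD^σ(n,κ)`. -/
def SatCDSigma [Fintype V] (p : V → V → ℝ) (σ : V → V → ℂ) (n κ : ℝ)
    (f : V → ℂ) : Prop :=
  ∀ x : V, (1 / n) * ‖magLap p σ f x‖ ^ 2 + κ * (magGamma p σ f f x).re
    ≤ (magGamma2 p σ f f x).re

/-- A signature with values in the group `S¹_ℓ` of `ℓ`-th roots of unity:
`σ_{xy}^ℓ = 1` and `σ_{yx} = σ_{xy}⁻¹` on oriented edges. -/
structure IsSignature (p : V → V → ℝ) (σ : V → V → ℂ) (ℓ : ℕ) : Prop where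
  mem : ∀ x y, Adj p x y → σ x y ^ ℓ = 1
  inv : ∀ x y, Adj p x y → σ x y * σ y x = 1

/-- The signature is entire: its values (on oriented edges) generate all of
`S¹_ℓ`, i.e. every `ℓ`-th root of unity is a product of signature values. -/
def Entire (p : V → V → ℝ) (σ : V → V → ℂ) (ℓ : ℕ) : Prop :=
  ∀ z : ℂ, z ^ ℓ = 1 →
    ∃ L : List (V × V), (∀ e ∈ L, Adj p e.1 e.2) ∧ (L.map fun e => σ e.1 e.2).prod = z

/-- The product of the signature values along the consecutive edges of a
list of vertices. -/
noncomputable def sigProd (σ : V → V → ℂ) (L : List V) : ℂ :=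
  ((L.zip L.tail).map fun e => σ e.1 e.2).prod

/-- A directed cycle: a closed walk along adjacent vertices. -/
def IsCycle (p : V → V → ℝ) (L : List V) : Prop :=
  2 ≤ L.length ∧ L.Chain' (Adj p) ∧ L.head? = L.getLast?

/-- A magnetic graph is balanced if the signature product along every directed
cycle equals `1`. -/
def Balanced (p : V → V → ℝ) (σ : V → V → ℂ) : Prop :=
  ∀ L : List V, IsCycle p L → sigProd σ L = 1

/-- A directed cycle whose signature product generates `S¹_ℓ`. -/
def IsGenCycle (p : V → V → ℝ) (σ : V → V → ℂ) (ℓ : ℕ) (L : List V) : Prop :=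
  IsCycle p L ∧ ∀ z : ℂ, z ^ ℓ = 1 → ∃ m : ℕ, sigProd σ L ^ m = z

/-- `g` is the magnetic girth: the length of a shortest directed cycle whose
signature product generates `S¹_ℓ`.  (A list of `g+1` vertices, with equal
endpoints, traverses `g` edges.) -/
def IsMagGirth (p : V → V → ℝ) (σ : V → V → ℂ) (ℓ : ℕ) (g : ℕ) : Prop :=
  (∃ L, IsGenCycle p σ ℓ L ∧ L.length = g + 1) ∧
  ∀ L, IsGenCycle p σ ℓ L → g + 1 ≤ L.length

/-- The `ℓ`-th roots of unity in `ℂ` form a finite type. -/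
noncomputable instance rootsFintype (ℓ : ℕ) [NeZero ℓ] :
    Fintype {z : ℂ // z ^ ℓ = 1} := by
  apply Fintype.ofFinset ((Polynomial.nthRoots ℓ (1 : ℂ)).toFinset)
  intro z
  rw [Multiset.mem_toFinset, Polynomial.mem_nthRoots (Nat.pos_of_ne_zero (NeZero.ne ℓ))]
  exact Iff.rfl

/-- The weight function of the lift (covering) graph `Ĝ` on `V × S¹_ℓ`. -/
noncomputable def liftP (p : V → V → ℝ) (σ : V → V → ℂ) (ℓ : ℕ) :
    V × {z : ℂ // z ^ ℓ = 1} → V × {z : ℂ // z ^ ℓ = 1} → ℝ :=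
  fun a b =>
    if Adj p a.1 b.1 ∧ (b.2 : ℂ) = (a.2 : ℂ) * σ a.1 b.1 then p a.1 b.1 else 0

/-- The lift embedding `f̂(x,ξ) = ξ·f(x)`. -/
noncomputable def liftEmb (ℓ : ℕ) (f : V → ℂ) : V × {z : ℂ // z ^ ℓ = 1} → ℂ :=
  fun a => (a.2 : ℂ) * f a.1

/-- A simple graph: all edge weights are `0` or `1`. -/
def Simple (p : V → V → ℝ) : Prop := ∀ x y, p x y = 0 ∨ p x y = 1

/-- `d` is the maximum degree of the graph. -/
def IsMaxDegree [Fintype V] (p : V → V → ℝ) (d : ℝ) : Prop :=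
  (∀ x, deg p x ≤ d) ∧ ∃ x, deg p x = d

/-- `l` is the least eigenvalue of `-Δ^σ`. -/
def IsLeastEigenvalue [Fintype V] (p : V → V → ℝ) (σ : V → V → ℂ) (l : ℝ) : Prop :=
  (∃ f : V → ℂ, f ≠ 0 ∧ ∀ x, -magLap p σ f x = (l : ℂ) * f x) ∧
  ∀ (μ : ℝ) (f : V → ℂ), f ≠ 0 → (∀ x, -magLap p σ f x = (μ : ℂ) * f x) → l ≤ μ

/-- The set of frustration values of a vertex subset `V₁`: sums
`∑_{edges {x,y} ⊆ V₁} p(x,y)|τ(x) − σ_{xy}τ(y)|` over switching functions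
`τ : V₁ → S¹_ℓ`.  (Each undirected edge is counted once, via the factor `1/2`.) -/
def frustrationSet [Fintype V] (p : V → V → ℝ) (σ : V → V → ℂ) (ℓ : ℕ)
    (V₁ : Finset V) : Set ℝ :=
  { r | ∃ τ : V → ℂ, (∀ x ∈ V₁, τ x ^ ℓ = 1) ∧
      r = (1 / 2) * ∑ x ∈ V₁, ∑ y ∈ V₁, p x y * ‖τ x - σ x y * τ y‖ }

/-- The set of Cheeger ratios `(ι^σ(V₁) + |E(V₁,V₁ᶜ)|)/vol(V₁)` over nonempty
vertex subsets `V₁`, where `ι^σ(V₁)` is the frustration index of `V₁`. -/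
def cheegerSet [Fintype V] (p : V → V → ℝ) (σ : V → V → ℂ) (ℓ : ℕ) : Set ℝ :=
  { r | ∃ V₁ : Finset V, V₁.Nonempty ∧ ∃ ι : ℝ, IsLeast (frustrationSet p σ ℓ V₁) ι ∧
      r = (ι + ∑ x ∈ V₁, ∑ y ∈ V₁ᶜ, p x y) / ∑ x ∈ V₁, deg p x }

/-- `h` is the magnetic Cheeger number `h₁^σ`. -/
def IsCheeger [Fintype V] (p : V → V → ℝ) (σ : V → V → ℂ) (ℓ : ℕ) (h : ℝ) : Prop :=
  IsLeast (cheegerSet p σ ℓ) h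

section Aux

set_option linter.unusedVariables false
set_option linter.unusedSectionVars false

variable [Fintype V]

lemma lap_ofReal (p : V → V → ℝ) (u : V → ℝ) (x : V) :
    lap p (fun v => (u v : ℂ)) x = ((lapR p u x : ℝ) : ℂ) := by
  unfold lap lapR
  push_cast
  ring

lemma lap_smul (p : V → V → ℝ) (c : ℂ) (u : V → ℂ) (x : V) :
    lap p (fun v => c * u v) x = c * lap p u x := by
  unfold lap
  simp only [Finset.mul_sum]
  exact Finset.sum_congr rfl fun y _ => by ring

lemma lapR_add (p : V → V → ℝ) (c : ℝ) (u w : V → ℝ) (x : V) :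
    lapR p (fun v => u v + c * w v) x = lapR p u x + c * lapR p w x := by
  unfold lapR
  simp only [Finset.mul_sum, ← Finset.sum_add_distrib]
  exact Finset.sum_congr rfl fun y _ => by ring

lemma gamma_self (p : V → V → ℝ) (f : V → ℂ) (x : V) :
    gamma p f f x = ((1 / 2 * energy p f x : ℝ) : ℂ) := by
  have h2 : (∑ y, (p x y : ℂ) * ((f y * conj (f y)) - (f x * conj (f x))))
      - f x * conj (∑ y, (p x y : ℂ) * (f y - f x))
      - (∑ y, (p x y : ℂ) * (f y - f x)) * conj (f x)
      = ∑ y, (p x y : ℂ) * (‖f y - f x‖ : ℂ) ^ 2 := by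
    simp only [map_sum, map_mul, map_sub, Complex.conj_ofReal, Finset.mul_sum,
      Finset.sum_mul, ← Finset.sum_sub_distrib]
    refine Finset.sum_congr rfl fun y _ => ?_
    rw [show ((‖f y - f x‖ : ℂ)) ^ 2 = (f y - f x) * conj (f y - f x) by
      rw [Complex.mul_conj']]
    simp only [map_sub]
    ring
  unfold gamma lap energy
  push_cast
  rw [map_mul, ← Complex.ofReal_inv, Complex.conj_ofReal, Complex.ofReal_inv]
  linear_combination (1 / 2 : ℂ) * ((deg p x : ℂ))⁻¹ * h2

-- Batch 2
lemma lapR_normSq (p : V → V → ℝ) (f : V → ℂ) (lam : ℝ)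
    (hl : ∀ x, lap p f x = -((lam : ℂ) * f x)) (x : V) :
    lapR p (fun v => ‖f v‖ ^ 2) x = energy p f x - 2 * lam * ‖f x‖ ^ 2 := by
  have h := gamma_self p f x
  unfold gamma at h
  rw [hl x] at h
  have hc : lap p (fun v => f v * conj (f v)) x = ((lapR p (fun v => ‖f v‖ ^ 2) x : ℝ) : ℂ) := by
    rw [← lap_ofReal]
    congr 1; funext v
    rw [Complex.mul_conj']; push_cast; ring
  rw [hc] at h
  simp only [map_neg, map_mul, Complex.conj_ofReal] at h
  have hfc : f x * conj (f x) = ((‖f x‖ : ℂ)) ^ 2 := Complex.mul_conj' _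
  have key : ((lapR p (fun v => ‖f v‖ ^ 2) x : ℝ) : ℂ)
      = (energy p f x : ℂ) - 2 * (lam : ℂ) * ((‖f x‖ : ℂ)) ^ 2 := by
    push_cast at h
    linear_combination 2 * h - 2 * (lam : ℂ) * hfc
  have : lapR p (fun v => ‖f v‖ ^ 2) x = energy p f x - 2 * lam * ‖f x‖ ^ 2 := by
    exact_mod_cast key
  exact this

lemma gamma_smul_right (p : V → V → ℝ) (r : ℝ) (f g : V → ℂ) (x : V) :
    gamma p f (fun v => (r : ℂ) * g v) x = (r : ℂ) * gamma p f g x := by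
  unfold gamma
  have h1 : lap p (fun v => f v * conj ((r : ℂ) * g v)) x
      = (r : ℂ) * lap p (fun v => f v * conj (g v)) x := by
    rw [← lap_smul]
    congr 1; funext v
    rw [map_mul, Complex.conj_ofReal]; ring
  rw [h1, lap_smul]
  simp only [map_mul, Complex.conj_ofReal]
  ring

lemma gamma_smul_left (p : V → V → ℝ) (r : ℝ) (f g : V → ℂ) (x : V) :
    gamma p (fun v => (r : ℂ) * f v) g x = (r : ℂ) * gamma p f g x := by
  unfold gamma
  have h1 : lap p (fun v => ((r : ℂ) * f v) * conj (g v)) x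
      = (r : ℂ) * lap p (fun v => f v * conj (g v)) x := by
    rw [← lap_smul]
    congr 1; funext v; ring
  rw [h1, lap_smul]
  ring

lemma gamma2_re (p : V → V → ℝ) (f : V → ℂ) (lam : ℝ)
    (hl : ∀ x, lap p f x = -((lam : ℂ) * f x)) (x : V) :
    (gamma2 p f f x).re
      = 1 / 2 * lapR p (fun v => 1 / 2 * energy p f v) x + lam * (1 / 2 * energy p f x) := by
  have hfl : lap p f = fun v => ((-lam : ℝ) : ℂ) * f v := funext fun v => by
    rw [hl]; push_cast; ring
  have hgf : gamma p f f = fun v => ((1 / 2 * energy p f v : ℝ) : ℂ) :=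
    funext fun v => gamma_self p f v
  have key : gamma2 p f f x
      = ((1 / 2 * lapR p (fun v => 1 / 2 * energy p f v) x
          + lam * (1 / 2 * energy p f x) : ℝ) : ℂ) := by
    unfold gamma2
    rw [hfl, gamma_smul_right, gamma_smul_left, hgf, lap_ofReal]
    push_cast
    ring
  rw [key, Complex.ofReal_re]

-- Batch 3
lemma sum_deg_lapR (p : V → V → ℝ) (hG : IsWeightedGraph p) (u : V → ℝ) :
    ∑ x, deg p x * lapR p u x = 0 := by
  have h1 : ∀ x : V, deg p x * lapR p u x = ∑ y, p x y * (u y - u x) := fun x => by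
    unfold lapR
    rw [← mul_assoc, mul_inv_cancel₀ (hG.deg_pos x).ne', one_mul]
  rw [Finset.sum_congr rfl fun x _ => h1 x]
  simp only [mul_sub, Finset.sum_sub_distrib]
  rw [sub_eq_zero]
  rw [Finset.sum_comm]
  refine Finset.sum_congr rfl fun x _ => Finset.sum_congr rfl fun y _ => ?_
  rw [hG.symm y x]

lemma sum_deg_lap (p : V → V → ℝ) (hG : IsWeightedGraph p) (u : V → ℂ) :
    ∑ x, (deg p x : ℂ) * lap p u x = 0 := by
  have h1 : ∀ x : V, (deg p x : ℂ) * lap p u x = ∑ y, (p x y : ℂ) * (u y - u x) := fun x => by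
    unfold lap
    rw [← mul_assoc, mul_inv_cancel₀ (by exact_mod_cast (hG.deg_pos x).ne'), one_mul]
  rw [Finset.sum_congr rfl fun x _ => h1 x]
  simp only [mul_sub, Finset.sum_sub_distrib]
  rw [sub_eq_zero]
  rw [Finset.sum_comm]
  refine Finset.sum_congr rfl fun x _ => Finset.sum_congr rfl fun y _ => ?_
  rw [hG.symm y x]

lemma lapR_nonpos_at_max (p : V → V → ℝ) (hG : IsWeightedGraph p) (g : V → ℝ) (x₀ : V)
    (hmax : ∀ y, g y ≤ g x₀) : lapR p g x₀ ≤ 0 := by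
  unfold lapR
  apply mul_nonpos_of_nonneg_of_nonpos (inv_nonneg.2 (hG.deg_pos x₀).le)
  apply Finset.sum_nonpos
  intro y _
  exact mul_nonpos_of_nonneg_of_nonpos (hG.nonneg x₀ y) (sub_nonpos.2 (hmax y))

lemma energy_nonneg (p : V → V → ℝ) (hG : IsWeightedGraph p) (f : V → ℂ) (x : V) :
    0 ≤ energy p f x := by
  unfold energy
  apply mul_nonneg (inv_nonneg.2 (hG.deg_pos x).le)
  exact Finset.sum_nonneg fun y _ => mul_nonneg (hG.nonneg x y) (sq_nonneg _)

lemma edge_sq_le (p : V → V → ℝ) (hG : IsWeightedGraph p) (f : V → ℂ) {a b : V}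
    (hab : Adj p a b) (hpab : p a b = 1) :
    ‖f b - f a‖ ^ 2 ≤ deg p a * energy p f a := by
  have h1 : deg p a * energy p f a = ∑ y, p a y * ‖f y - f a‖ ^ 2 := by
    unfold energy
    rw [← mul_assoc, mul_inv_cancel₀ (hG.deg_pos a).ne', one_mul]
  rw [h1]
  calc ‖f b - f a‖ ^ 2 = p a b * ‖f b - f a‖ ^ 2 := by rw [hpab, one_mul]
    _ ≤ ∑ y, p a y * ‖f y - f a‖ ^ 2 :=
      Finset.single_le_sum (f := fun y => p a y * ‖f y - f a‖ ^ 2)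
        (fun y _ => mul_nonneg (hG.nonneg a y) (sq_nonneg _)) (Finset.mem_univ b)

lemma chain_telescope (p : V → V → ℝ) (u : V → ℝ) (K : ℝ) (hK : 0 ≤ K)
    (hedge : ∀ a b, Adj p a b → u a - u b ≤ K) :
    ∀ (L : List V) (x : V), List.Chain (Adj p) x L →
      u x - u ((x :: L).getLast (List.cons_ne_nil x L)) ≤ L.length * K := by
  intro L
  induction L with
  | nil => intro x _; simp
  | cons b L' ih =>
    intro x hchain
    simp only [List.Chain, List.chain_cons] at hchain
    have h1 := hedge x b hchain.1
    have h2 := ih b hchain.2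
    have h3 : ((x :: b :: L').getLast (List.cons_ne_nil x (b :: L')))
        = ((b :: L').getLast (List.cons_ne_nil b L')) := List.getLast_cons _
    rw [h3]
    have : u x - u ((b :: L').getLast (List.cons_ne_nil b L'))
        = (u x - u b) + (u b - u ((b :: L').getLast (List.cons_ne_nil b L'))) := by ring
    rw [this]
    calc (u x - u b) + (u b - u ((b :: L').getLast (List.cons_ne_nil b L')))
        ≤ K + L'.length * K := add_le_add h1 h2
      _ = (L'.length + 1) * K := by ring
      _ = ((b :: L').length : ℝ) * K := by push_cast [List.length_cons]; ring

end Aux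

set_option maxHeartbeats 2000000 in
/-- Theorem of Chung–Lin–Yau.  For a finite, connected,
simple graph with diameter `D` and maximum degree `d`, and a harmonic
eigenfunction `f` of `−Δ` with eigenvalue `λ > 0` satisfying `CD(n,κ)`:
`λ ≥ (1 + 4κdD²)/(d(8 − 2/n)D²)`. -/
theorem eigenvalue_lower_bound {V : Type*} [Fintype V] [Nonempty V]
    (p : V → V → ℝ) (hG : IsWeightedGraph p) (hconn : Connected p)
    (hsimple : Simple p) (D : ℕ) (hD : IsDiameter p D)
    (d : ℝ) (hd : IsMaxDegree p d)
    (n κ : ℝ) (hn : 1 < n) (f : V → ℂ) (lam : ℝ) (hlam : 0 < lam)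
    (hf0 : f ≠ 0) (heig : ∀ x, -lap p f x = (lam : ℂ) * f x)
    (hcd : SatCD p n κ f) :
    (1 + 4 * κ * d * (D : ℝ) ^ 2) / (d * (8 - 2 / n) * (D : ℝ) ^ 2) ≤ lam := by
  classical
  -- basic positivity facts
  obtain ⟨xd, hxd⟩ := hd.2
  have hd0 : 0 < d := hxd ▸ hG.deg_pos xd
  have hn0 : 0 < n := lt_trans one_pos hn
  have hinvn : 0 < 1 / n := by positivity
  -- D ≥ 1
  have hD1 : 1 ≤ D := by
    by_contra hc
    have hD0 : D = 0 := by omega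
    obtain ⟨x⟩ := ‹Nonempty V›
    have hxy : ∀ y : V, y = x := by
      intro y
      obtain ⟨L, hlen, hchain, hlast⟩ := hD.1 x y
      have hL : L = [] := List.length_eq_zero_iff.mp (Nat.le_zero.mp (hD0 ▸ hlen))
      subst hL
      simpa using hlast.symm
    have hdeg0 : deg p x = 0 := by
      unfold deg
      refine Finset.sum_eq_zero fun y _ => ?_
      rw [hxy y]; exact hG.loopless x
    exact absurd hdeg0 (hG.deg_pos x).ne'
  have hDR : (1 : ℝ) ≤ (D : ℝ) := by exact_mod_cast hD1
  have hDR0 : (0 : ℝ) < (D : ℝ) := lt_of_lt_of_le one_pos hDR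
  -- eigenvalue equation
  have hl : ∀ x, lap p f x = -((lam : ℂ) * f x) := fun x => by
    rw [← heig x, neg_neg]
  set γre : V → ℝ := fun v => 1 / 2 * energy p f v with hγre
  have hγnonneg : ∀ x, 0 ≤ γre x := fun x => by
    simp only [hγre]
    have := energy_nonneg p hG f x
    linarith
  -- CD inequality restated in real terms
  have hcd' : ∀ x, (1 / n) * (lam ^ 2 * ‖f x‖ ^ 2) + κ * γre x
      ≤ 1 / 2 * lapR p γre x + lam * γre x := by
    intro x
    have h1 := hcd x
    rw [gamma_self p f x, Complex.ofReal_re, gamma2_re p f lam hl x] at h1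
    have h2 : ‖lap p f x‖ ^ 2 = lam ^ 2 * ‖f x‖ ^ 2 := by
      rw [hl x, norm_neg, norm_mul, Complex.norm_real, mul_pow, Real.norm_eq_abs, sq_abs]
    rw [h2] at h1
    exact h1
  -- Lichnerowicz step: κ ≤ lam * (1 - 1/n)
  set S : ℝ := ∑ x, deg p x * ‖f x‖ ^ 2 with hS
  set G : ℝ := ∑ x, deg p x * γre x with hGdef
  have hS0 : 0 < S := by
    obtain ⟨z, hz⟩ := Function.ne_iff.mp hf0
    refine Finset.sum_pos' (fun x _ => mul_nonneg (hG.deg_pos x).le (sq_nonneg _)) ?_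
    exact ⟨z, Finset.mem_univ z,
      mul_pos (hG.deg_pos z) (pow_pos (norm_pos_iff.mpr hz) 2)⟩
  have hGS : G = lam * S := by
    have h0 := sum_deg_lapR p hG (fun v => ‖f v‖ ^ 2)
    have h1 : ∑ x, deg p x * lapR p (fun v => ‖f v‖ ^ 2) x = 2 * G - 2 * lam * S := by
      rw [hGdef, hS, Finset.mul_sum, Finset.mul_sum, ← Finset.sum_sub_distrib]
      refine Finset.sum_congr rfl fun x _ => ?_
      rw [lapR_normSq p f lam hl x]
      simp only [hγre]
      ring
    rw [h1] at h0
    linarith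
  have hκ : κ ≤ lam * (1 - 1 / n) := by
    have hsum2 : ∑ x, deg p x * ((1 / n) * (lam ^ 2 * ‖f x‖ ^ 2) + κ * γre x)
        ≤ ∑ x, deg p x * (1 / 2 * lapR p γre x + lam * γre x) :=
      Finset.sum_le_sum fun x _ => mul_le_mul_of_nonneg_left (hcd' x) (hG.deg_pos x).le
    have hL : ∑ x, deg p x * ((1 / n) * (lam ^ 2 * ‖f x‖ ^ 2) + κ * γre x)
        = (1 / n) * lam ^ 2 * S + κ * G := by
      rw [show ∑ x, deg p x * ((1 / n) * (lam ^ 2 * ‖f x‖ ^ 2) + κ * γre x)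
          = ∑ x, ((1 / n) * lam ^ 2 * (deg p x * ‖f x‖ ^ 2) + κ * (deg p x * γre x))
          from Finset.sum_congr rfl fun x _ => by ring]
      rw [Finset.sum_add_distrib, ← Finset.mul_sum, ← Finset.mul_sum, hS, hGdef]
    have hR : ∑ x, deg p x * (1 / 2 * lapR p γre x + lam * γre x) = lam * G := by
      rw [show ∑ x, deg p x * (1 / 2 * lapR p γre x + lam * γre x)
          = ∑ x, ((1 / 2) * (deg p x * lapR p γre x) + lam * (deg p x * γre x))
          from Finset.sum_congr rfl fun x _ => by ring]
      rw [Finset.sum_add_distrib, ← Finset.mul_sum, ← Finset.mul_sum,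
        sum_deg_lapR p hG γre, hGdef]
      ring
    rw [hL, hR, hGS] at hsum2
    nlinarith [mul_pos hlam hS0]
  -- the constant A = 2λ - κ
  set A : ℝ := 2 * lam - κ with hAdef
  have hA0 : 0 < A := by
    have : lam * (1 - 1 / n) < 2 * lam := by nlinarith
    simp only [hAdef]; linarith
  have hAn : lam * (1 / n) ≤ A := by
    have h1 : lam * (1 / n) = lam * (1 / n) := by ring
    nlinarith
  -- maximum point of g
  set g : V → ℝ := fun v => γre v + A * ‖f v‖ ^ 2 with hgdef
  obtain ⟨x₀, -, hx₀⟩ := Finset.exists_max_image Finset.univ g Finset.univ_nonempty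
  have hx₀' : ∀ y, g y ≤ g x₀ := fun y => hx₀ y (Finset.mem_univ y)
  have hlapg : lapR p g x₀ ≤ 0 := lapR_nonpos_at_max p hG g x₀ hx₀'
  have hsplit : lapR p g x₀ = lapR p γre x₀ + A * lapR p (fun v => ‖f v‖ ^ 2) x₀ :=
    lapR_add p A γre (fun v => ‖f v‖ ^ 2) x₀
  have hlapnorm : lapR p (fun v => ‖f v‖ ^ 2) x₀ = 2 * γre x₀ - 2 * lam * ‖f x₀‖ ^ 2 := by
    rw [lapR_normSq p f lam hl x₀]
    simp only [hγre]; ring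
  have hcd₀ := hcd' x₀
  -- γre x₀ ≤ (A - lam/n) * ‖f x₀‖²
  have hγ₀ : γre x₀ ≤ (A - lam * (1 / n)) * ‖f x₀‖ ^ 2 := by
    rw [hsplit, hlapnorm] at hlapg
    simp only [hAdef] at hlapg ⊢
    have h2 : 2 * lam * γre x₀ ≤ 2 * lam * ((2 * lam - κ - lam * (1 / n)) * ‖f x₀‖ ^ 2) := by
      linarith [hlapg, hcd₀]
    have h3 := le_of_mul_le_mul_left h2 (by linarith : (0:ℝ) < 2 * lam)
    linarith [h3]
  -- the maximum M of ‖f‖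
  obtain ⟨x₁, -, hx₁⟩ := Finset.exists_max_image Finset.univ (fun v => ‖f v‖) Finset.univ_nonempty
  set M : ℝ := ‖f x₁‖ with hMdef
  have hMle : ∀ y, ‖f y‖ ≤ M := fun y => hx₁ y (Finset.mem_univ y)
  have hM0 : 0 < M := by
    obtain ⟨z, hz⟩ := Function.ne_iff.mp hf0
    exact lt_of_lt_of_le (norm_pos_iff.mpr hz) (hMle z)
  -- global bound on γre
  set C : ℝ := (2 * A - lam * (1 / n)) * M ^ 2 with hCdef
  have hcoef : 0 ≤ 2 * A - lam * (1 / n) := by linarith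
  have hC0 : 0 ≤ C := mul_nonneg hcoef (sq_nonneg M)
  have hγle : ∀ x, γre x ≤ C := by
    intro x
    have h1 : γre x ≤ g x := by
      simp only [hgdef]
      have := mul_nonneg hA0.le (sq_nonneg ‖f x‖)
      linarith
    have h3 : ‖f x₀‖ ^ 2 ≤ M ^ 2 := pow_le_pow_left₀ (norm_nonneg _) (hMle x₀) 2
    have h4 : (2 * A - lam * (1 / n)) * ‖f x₀‖ ^ 2 ≤ (2 * A - lam * (1 / n)) * M ^ 2 :=
      mul_le_mul_of_nonneg_left h3 hcoef
    have h2 : g x₀ ≤ C := by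
      simp only [hgdef, hCdef]
      linarith [hγ₀, h4]
    linarith [hx₀' x]
  -- sum of d·f vanishes
  have hsumf : ∑ x, (deg p x : ℂ) * f x = 0 := by
    have h0 := sum_deg_lap p hG f
    have h1 : ∑ x, (deg p x : ℂ) * lap p f x
        = -(lam : ℂ) * ∑ x, (deg p x : ℂ) * f x := by
      rw [Finset.mul_sum]
      exact Finset.sum_congr rfl fun x _ => by rw [hl x]; ring
    rw [h1] at h0
    rcases mul_eq_zero.mp h0 with h | h
    · exact absurd h (by simp [Complex.ext_iff]; exact hlam.ne')
    · exact h
  -- the function u and a point where it is ≤ 0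
  set u : V → ℝ := fun x => (conj (f x₁) * f x).re with hudef
  have hux₁ : u x₁ = M ^ 2 := by
    simp only [hudef]
    rw [mul_comm, Complex.mul_conj', ← Complex.ofReal_pow, Complex.ofReal_re, hMdef]
  have hsumu : ∑ x, deg p x * u x = 0 := by
    have h1 : ∑ x, deg p x * u x = (conj (f x₁) * ∑ x, (deg p x : ℂ) * f x).re := by
      rw [Finset.mul_sum, Complex.re_sum]
      refine Finset.sum_congr rfl fun x _ => ?_
      rw [show conj (f x₁) * ((deg p x : ℂ) * f x)
          = (deg p x : ℂ) * (conj (f x₁) * f x) by ring, Complex.re_ofReal_mul]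
    rw [h1, hsumf, mul_zero, Complex.zero_re]
  have hexy : ∃ y₁, u y₁ ≤ 0 := by
    by_contra hcon
    push_neg at hcon
    have : 0 < ∑ x, deg p x * u x :=
      Finset.sum_pos (fun x _ => mul_pos (hG.deg_pos x) (hcon x)) Finset.univ_nonempty
    linarith [hsumu]
  obtain ⟨y₁, hy₁⟩ := hexy
  -- edge estimate
  set K : ℝ := Real.sqrt (2 * d * C) with hKdef
  have hK0 : 0 ≤ K := Real.sqrt_nonneg _
  have h2dC : 0 ≤ 2 * d * C := mul_nonneg (mul_nonneg (by norm_num) hd0.le) hC0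
  have hedge : ∀ a b, Adj p a b → u a - u b ≤ M * K := by
    intro a b hab
    have hpab : p a b = 1 := by
      rcases hsimple a b with h | h
      · exact absurd h (ne_of_gt hab)
      · exact h
    have h1 : ‖f b - f a‖ ^ 2 ≤ 2 * d * C := by
      have h4 : energy p f a = 2 * γre a := by simp only [hγre]; ring
      calc ‖f b - f a‖ ^ 2 ≤ deg p a * energy p f a := edge_sq_le p hG f hab hpab
        _ ≤ d * energy p f a :=
          mul_le_mul_of_nonneg_right (hd.1 a) (energy_nonneg p hG f a)
        _ = d * (2 * γre a) := by rw [h4]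
        _ ≤ d * (2 * C) := mul_le_mul_of_nonneg_left (by linarith [hγle a]) hd0.le
        _ = 2 * d * C := by ring
    have h6 : ‖f a - f b‖ ≤ K := by
      rw [hKdef, show ‖f a - f b‖ = ‖f b - f a‖ from norm_sub_rev _ _]
      exact (Real.le_sqrt (norm_nonneg _) h2dC).mpr h1
    have h7 : u a - u b = (conj (f x₁) * (f a - f b)).re := by
      simp only [hudef, mul_sub, Complex.sub_re]
    rw [h7]
    calc (conj (f x₁) * (f a - f b)).re ≤ ‖conj (f x₁) * (f a - f b)‖ :=
          Complex.re_le_norm _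
      _ = M * ‖f a - f b‖ := by rw [norm_mul, RCLike.norm_conj]
      _ ≤ M * K := mul_le_mul_of_nonneg_left h6 hM0.le
  -- telescope along a path from x₁ to y₁
  obtain ⟨L, hlen, hchain, hlast⟩ := hD.1 x₁ y₁
  have htel := chain_telescope p u (M * K) (mul_nonneg hM0.le hK0) hedge L x₁ hchain
  rw [hlast] at htel
  have hMD : M ^ 2 ≤ (D : ℝ) * (M * K) := by
    have h1 : (L.length : ℝ) ≤ (D : ℝ) := by exact_mod_cast hlen
    have h2 : (L.length : ℝ) * (M * K) ≤ (D : ℝ) * (M * K) :=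
      mul_le_mul_of_nonneg_right h1 (mul_nonneg hM0.le hK0)
    calc M ^ 2 = u x₁ - 0 := by rw [hux₁]; ring
      _ ≤ u x₁ - u y₁ := by linarith
      _ ≤ (L.length : ℝ) * (M * K) := htel
      _ ≤ (D : ℝ) * (M * K) := h2
  -- conclude
  have hMK : M ≤ (D : ℝ) * K := by
    have h1 : M * M ≤ ((D : ℝ) * K) * M := by nlinarith
    exact le_of_mul_le_mul_right h1 hM0
  have hM2 : M ^ 2 ≤ (D : ℝ) ^ 2 * (2 * d * C) := by
    have h1 : M ^ 2 ≤ ((D : ℝ) * K) ^ 2 := by nlinarith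
    rw [hKdef, mul_pow, Real.sq_sqrt h2dC] at h1
    exact h1
  have hfinal : 1 ≤ 2 * d * (D : ℝ) ^ 2 * (2 * A - lam * (1 / n)) := by
    have hM2' : 0 < M ^ 2 := by positivity
    rw [hCdef] at hM2
    nlinarith
  have hden : 0 < d * (8 - 2 / n) * (D : ℝ) ^ 2 := by
    have h1 : 2 / n < 2 := by
      rw [div_lt_iff₀ hn0]; linarith
    have : 0 < (8 : ℝ) - 2 / n := by linarith
    positivity
  rw [div_le_iff₀ hden, show (8 - 2 / n : ℝ) = 8 - 2 * (1 / n) by ring]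
  have hAexp : 2 * A - lam * (1 / n) = 4 * lam - 2 * κ - lam * (1 / n) := by rw [hAdef]; ring
  rw [hAexp] at hfinal
  have hdivn : lam * (1 / n) = lam * (1 / n) := by ring
  nlinarith [hfinal]


end Mag
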